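/- Let G be a triangle-free graph with at least 3 vertices and let G_u be obtained from G by adding a new vertex u adjacent to all vertices of G. Then the iteration time of G_u in the geodesic convexity equals max(ti_P3(G), 1), where ti_P3(G) is the iteration time of G in the P3 convexity. -/
import Mathlib


/-- Convex hull: smallest `I`-closed superset. -/
def convexHullOf {V : Type*} (I : Set V → Set V) (S : Set V) : Set V :=
  ⋂₀ {T | S ⊆ T ∧ I T ⊆ T}

/-- Iteration time of a set: least number of applications of `I` producing the hull. -/
noncomputable def iterTimeSet {V : Type*} (I : Set V → Set V) (S : Set V) : ℕ :=
  sInf {k | I^[k] S = convexHullOf I S}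

/-- Iteration time of the convexity: maximum over all vertex subsets. -/
noncomputable def iterTime {V : Type*} (I : Set V → Set V) : ℕ :=
  ⨆ S : Set V, iterTimeSet I S

def p3Interval {V : Type*} (G : SimpleGraph V) (S : Set V) : Set V :=
  S ∪ {v | ∃ a ∈ S, ∃ b ∈ S, a ≠ b ∧ G.Adj v a ∧ G.Adj v b}

/-- `p` is an induced path: a path such that every edge of `G` between its vertices
is an edge of the path. -/
def IsInducedPathWalk {V : Type*} (G : SimpleGraph V) {x y : V} (p : G.Walk x y) : Prop :=
  p.IsPath ∧ ∀ a ∈ p.support, ∀ b ∈ p.support, G.Adj a b → p.toSubgraph.Adj a b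

/-- Monophonic interval: vertices on induced paths between vertices of `S`. -/
def monoInterval {V : Type*} (G : SimpleGraph V) (S : Set V) : Set V :=
  {v | ∃ x ∈ S, ∃ y ∈ S, ∃ p : G.Walk x y, IsInducedPathWalk G p ∧ v ∈ p.support}

/-- Geodesic interval: vertices on shortest paths between vertices of `S`. -/
def geoInterval {V : Type*} (G : SimpleGraph V) (S : Set V) : Set V :=
  {v | ∃ x ∈ S, ∃ y ∈ S, ∃ p : G.Walk x y, p.IsPath ∧ p.length = G.dist x y ∧ v ∈ p.support}

/-- The graph obtained from `G` by adding a universal vertex `none`. -/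
def addUniversal {V : Type*} (G : SimpleGraph V) : SimpleGraph (Option V) :=
  SimpleGraph.fromRel (fun a b =>
    a = none ∨ ∃ u v : V, a = some u ∧ b = some v ∧ G.Adj u v)

/-! ### General hull machinery -/

section HullMachinery

variable {W : Type*} {I : Set W → Set W}

lemma subset_hull' (I : Set W → Set W) (S : Set W) : S ⊆ convexHullOf I S := by
  intro x hx
  exact Set.mem_sInter.mpr fun T hT => hT.1 hx

lemma hull_subset' {S T : Set W} (h1 : S ⊆ T) (h2 : I T ⊆ T) : convexHullOf I S ⊆ T :=
  Set.sInter_subset_of_mem ⟨h1, h2⟩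

variable (hmono : ∀ ⦃A B : Set W⦄, A ⊆ B → I A ⊆ I B) (hprog : ∀ A : Set W, A ⊆ I A)

include hprog in
lemma subset_iter' (S : Set W) : ∀ k, S ⊆ I^[k] S := by
  intro k
  induction k with
  | zero => simp
  | succ k ih =>
    rw [Function.iterate_succ_apply']
    exact ih.trans (hprog _)

include hmono in
lemma hull_closed' (S : Set W) : I (convexHullOf I S) ⊆ convexHullOf I S := by
  intro x hx
  refine Set.mem_sInter.mpr fun T hT => ?_
  have h1 : convexHullOf I S ⊆ T := Set.sInter_subset_of_mem hT
  exact hT.2 (hmono h1 hx)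

include hmono in
lemma iter_subset_hull' (S : Set W) : ∀ k, I^[k] S ⊆ convexHullOf I S := by
  intro k
  induction k with
  | zero => simpa using subset_hull' I S
  | succ k ih =>
    rw [Function.iterate_succ_apply']
    exact (hmono ih).trans (hull_closed' hmono S)

include hmono hprog in
lemma hull_eq_iter_of_fixed {S : Set W} {k : ℕ} (h : I (I^[k] S) = I^[k] S) :
    convexHullOf I S = I^[k] S :=
  le_antisymm (hull_subset' (subset_iter' hprog S k) h.le) (iter_subset_hull' hmono S k)

include hprog in
lemma exists_fixed' [Finite W] (S : Set W) : ∃ k, I (I^[k] S) = I^[k] S := by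
  by_contra h
  push_neg at h
  have hss : ∀ k, I^[k] S ⊂ I^[k + 1] S := by
    intro k
    rw [Function.iterate_succ_apply']
    exact (hprog _).ssubset_of_ne (h k).symm
  have hsm : StrictMono fun k => (I^[k] S).ncard :=
    strictMono_nat_of_lt_succ fun k => Set.ncard_lt_ncard (hss k) (Set.toFinite _)
  have h1 : Nat.card W + 1 ≤ (I^[Nat.card W + 1] S).ncard := hsm.le_apply
  have h2 : (I^[Nat.card W + 1] S).ncard ≤ Nat.card W := by
    rw [← Set.ncard_univ]
    exact Set.ncard_le_ncard (Set.subset_univ _) (Set.toFinite _)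
  omega

include hmono hprog in
lemma iterTime_set_nonempty [Finite W] (S : Set W) :
    {k | I^[k] S = convexHullOf I S}.Nonempty := by
  obtain ⟨k, hk⟩ := exists_fixed' hprog S
  exact ⟨k, (hull_eq_iter_of_fixed hmono hprog hk).symm⟩

include hmono hprog in
lemma hull_fixed' (S : Set W) : I (convexHullOf I S) = convexHullOf I S :=
  le_antisymm (hull_closed' hmono S) (hprog _)

include hmono hprog in
lemma iter_eq_hull_iff [Finite W] {S : Set W} {k : ℕ} :
    I^[k] S = convexHullOf I S ↔ iterTimeSet I S ≤ k := by
  constructor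
  · exact fun h => Nat.sInf_le h
  · intro hk
    have hm : I^[iterTimeSet I S] S = convexHullOf I S :=
      Nat.sInf_mem (iterTime_set_nonempty hmono hprog S)
    obtain ⟨d, rfl⟩ := Nat.exists_eq_add_of_le hk
    rw [add_comm, Function.iterate_add_apply, hm]
    induction d with
    | zero => simp
    | succ d ih =>
      rw [Function.iterate_succ_apply', ih]
      exact hull_fixed' hmono hprog S
      all_goals omega

end HullMachinery

/-! ### Graph facts -/

section GraphFacts

variable {V : Type*} {G : SimpleGraph V}

lemma triangle_free' (htf : G.CliqueFree 3) {a b c : V}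
    (h1 : G.Adj a b) (h2 : G.Adj a c) (h3 : G.Adj b c) : False := by
  classical
  exact htf {a, b, c} (SimpleGraph.is3Clique_triple_iff.mpr ⟨h1, h2, h3⟩)

lemma addU_adj_none_some {a : V} : (addUniversal G).Adj none (some a) :=
  ⟨by simp, Or.inl (Or.inl rfl)⟩

lemma addU_adj_some_none {a : V} : (addUniversal G).Adj (some a) none :=
  addU_adj_none_some.symm

lemma addU_adj_some_some {a b : V} :
    (addUniversal G).Adj (some a) (some b) ↔ G.Adj a b := by
  constructor
  · rintro ⟨hne, (h | ⟨u, w, hu, hw, huw⟩) | (h | ⟨u, w, hu, hw, huw⟩)⟩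
    · simp at h
    · obtain rfl : a = u := Option.some_injective _ hu
      obtain rfl : b = w := Option.some_injective _ hw
      exact huw
    · simp at h
    · obtain rfl : b = u := Option.some_injective _ hu
      obtain rfl : a = w := Option.some_injective _ hw
      exact huw.symm
  · intro h
    exact ⟨by simpa using h.ne, Or.inl (Or.inr ⟨a, b, rfl, rfl, h⟩)⟩

lemma addU_dist_le_two (x y : Option V) : (addUniversal G).dist x y ≤ 2 := by
  rcases eq_or_ne x y with rfl | hne
  · simp [SimpleGraph.dist_self]
  · match x, y with
    | none, none => exact absurd rfl hne
    | none, some b =>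
      have := SimpleGraph.dist_le (SimpleGraph.Walk.cons (addU_adj_none_some (G := G) (a := b)) .nil)
      simpa using this.trans (by norm_num)
    | some a, none =>
      have := SimpleGraph.dist_le (SimpleGraph.Walk.cons (addU_adj_some_none (G := G) (a := a)) .nil)
      simpa using this.trans (by norm_num)
    | some a, some b =>
      have := SimpleGraph.dist_le
        (SimpleGraph.Walk.cons (addU_adj_some_none (G := G) (a := a))
          (SimpleGraph.Walk.cons (addU_adj_none_some (G := G) (a := b)) .nil))
      simpa using this

lemma addU_dist_eq_two {x y : Option V} (hne : x ≠ y) (hnadj : ¬(addUniversal G).Adj x y) :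
    (addUniversal G).dist x y = 2 := by
  obtain ⟨a, rfl⟩ : ∃ a, x = some a := by
    match x with
    | some a => exact ⟨a, rfl⟩
    | none =>
      exfalso
      obtain ⟨b, rfl⟩ := Option.ne_none_iff_exists'.mp (Ne.symm hne)
      exact hnadj addU_adj_none_some
  obtain ⟨b, rfl⟩ : ∃ b, y = some b := by
    match y with
    | some b => exact ⟨b, rfl⟩
    | none => exact absurd addU_adj_some_none hnadj
  have hw := SimpleGraph.dist_le
    (SimpleGraph.Walk.cons (addU_adj_some_none (a := a) (G := G))
      (SimpleGraph.Walk.cons (addU_adj_none_some (a := b)) .nil))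
  simp only [SimpleGraph.Walk.length_cons, SimpleGraph.Walk.length_nil] at hw
  have h0 : (addUniversal G).dist (some a) (some b) ≠ 0 := by
    intro h
    rcases SimpleGraph.dist_eq_zero_iff_eq_or_not_reachable.mp h with h' | h'
    · exact hne h'
    · exact h' ⟨SimpleGraph.Walk.cons addU_adj_some_none
        (SimpleGraph.Walk.cons addU_adj_none_some .nil)⟩
  have h1 : (addUniversal G).dist (some a) (some b) ≠ 1 := fun h =>
    hnadj (SimpleGraph.dist_eq_one_iff_adj.mp h)
  omega

/-- Characterization of the geodesic interval in `addUniversal G`. -/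
lemma geo_char (S : Set (Option V)) :
    geoInterval (addUniversal G) S =
      S ∪ {w | ∃ x ∈ S, ∃ y ∈ S, x ≠ y ∧ ¬(addUniversal G).Adj x y ∧
        (addUniversal G).Adj x w ∧ (addUniversal G).Adj w y} := by
  ext v
  constructor
  · rintro ⟨x, hx, y, hy, p, hp, hlen, hv⟩
    have hd2 := addU_dist_le_two (G := G) x y
    cases p with
    | nil =>
      simp only [SimpleGraph.Walk.support_nil, List.mem_singleton] at hv
      exact Or.inl (hv ▸ hx)
    | @cons _ b _ h q =>
      cases q with
      | nil =>
        simp only [SimpleGraph.Walk.support_cons, SimpleGraph.Walk.support_nil,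
          List.mem_cons, List.mem_singleton, List.not_mem_nil, or_false] at hv
        rcases hv with rfl | rfl
        · exact Or.inl hx
        · exact Or.inl hy
      | @cons _ c _ h' q' =>
        cases q' with
        | nil =>
          simp only [SimpleGraph.Walk.length_cons, SimpleGraph.Walk.length_nil] at hlen
          have hdist : (addUniversal G).dist x y = 2 := by omega
          have hne : x ≠ y := by
            rintro rfl
            rw [SimpleGraph.dist_self] at hdist
            omega
          have hnadj : ¬(addUniversal G).Adj x y := by
            intro hadj
            rw [SimpleGraph.dist_eq_one_iff_adj.mpr hadj] at hdist
            omega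
          simp only [SimpleGraph.Walk.support_cons, SimpleGraph.Walk.support_nil,
            List.mem_cons, List.mem_singleton, List.not_mem_nil, or_false] at hv
          rcases hv with rfl | rfl | rfl
          · exact Or.inl hx
          · exact Or.inr ⟨x, hx, y, hy, hne, hnadj, h, h'⟩
          · exact Or.inl hy
        | cons h'' q'' =>
          exfalso
          simp only [SimpleGraph.Walk.length_cons] at hlen
          omega
  · rintro (hv | ⟨x, hx, y, hy, hne, hnadj, hxv, hvy⟩)
    · exact ⟨v, hv, v, hv, .nil, SimpleGraph.Walk.IsPath.nil, by simp [SimpleGraph.dist_self],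
        by simp⟩
    · refine ⟨x, hx, y, hy, .cons hxv (.cons hvy .nil), ?_, ?_, by simp⟩
      · rw [SimpleGraph.Walk.isPath_def]
        simp [hxv.ne, hne, hvy.ne]
      · simp [addU_dist_eq_two hne hnadj]

lemma some_mem_geo_iff (htf : G.CliqueFree 3) (S : Set (Option V)) (v : V) :
    some v ∈ geoInterval (addUniversal G) S ↔ v ∈ p3Interval G (some ⁻¹' S) := by
  rw [geo_char]
  constructor
  · rintro (hv | ⟨x, hx, y, hy, hne, hnadj, hxv, hvy⟩)
    · exact Or.inl hv
    · obtain ⟨a, rfl⟩ : ∃ a, x = some a := by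
        match x with
        | some a => exact ⟨a, rfl⟩
        | none =>
          exfalso
          obtain ⟨b, rfl⟩ := Option.ne_none_iff_exists'.mp (Ne.symm hne)
          exact hnadj addU_adj_none_some
      obtain ⟨b, rfl⟩ : ∃ b, y = some b := by
        match y with
        | some b => exact ⟨b, rfl⟩
        | none => exact absurd addU_adj_some_none hnadj
      exact Or.inr ⟨a, hx, b, hy, by simpa using hne,
        (addU_adj_some_some.mp hxv).symm, addU_adj_some_some.mp hvy⟩
  · rintro (hv | ⟨a, ha, b, hb, hab, hva, hvb⟩)
    · exact Or.inl hv
    · have hnadj : ¬G.Adj a b := fun h => triangle_free' htf hva hvb h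
      refine Or.inr ⟨some a, ha, some b, hb, by simpa using hab, ?_,
        addU_adj_some_some.mpr hva.symm, addU_adj_some_some.mpr hvb⟩
      rw [addU_adj_some_some]
      exact hnadj

lemma none_mem_geo_iff (S : Set (Option V)) :
    none ∈ geoInterval (addUniversal G) S ↔
      none ∈ S ∨ ∃ a ∈ some ⁻¹' S, ∃ b ∈ some ⁻¹' S, a ≠ b ∧ ¬G.Adj a b := by
  rw [geo_char]
  constructor
  · rintro (h | ⟨x, hx, y, hy, hne, hnadj, hxn, hny⟩)
    · exact Or.inl h
    · obtain ⟨a, rfl⟩ := Option.ne_none_iff_exists'.mp hxn.ne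
      obtain ⟨b, rfl⟩ := Option.ne_none_iff_exists'.mp hny.ne'
      exact Or.inr ⟨a, hx, b, hy, by simpa using hne,
        fun h => hnadj (addU_adj_some_some.mpr h)⟩
  · rintro (h | ⟨a, ha, b, hb, hab, hnadj⟩)
    · exact Or.inl h
    · refine Or.inr ⟨some a, ha, some b, hb, by simpa using hab, ?_,
        addU_adj_some_none, addU_adj_none_some⟩
      rw [addU_adj_some_some]
      exact hnadj

/-! ### Monotonicity and progressivity of the interval operators -/

lemma p3_subset (S : Set V) : S ⊆ p3Interval G S := Set.subset_union_left

lemma p3_mono : ∀ ⦃A B : Set V⦄, A ⊆ B → p3Interval G A ⊆ p3Interval G B := by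
  rintro A B h v (hv | ⟨a, ha, b, hb, hab, hva, hvb⟩)
  · exact Or.inl (h hv)
  · exact Or.inr ⟨a, h ha, b, h hb, hab, hva, hvb⟩

lemma geo_subset {W : Type*} (H : SimpleGraph W) (S : Set W) : S ⊆ geoInterval H S := by
  intro v hv
  exact ⟨v, hv, v, hv, .nil, SimpleGraph.Walk.IsPath.nil, by simp [SimpleGraph.dist_self],
    by simp⟩

lemma geo_mono {W : Type*} (H : SimpleGraph W) :
    ∀ ⦃A B : Set W⦄, A ⊆ B → geoInterval H A ⊆ geoInterval H B := by
  rintro A B h v ⟨x, hx, y, hy, p, hp⟩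
  exact ⟨x, h hx, y, h hy, p, hp⟩

/-- "Has a non-adjacent pair". -/
def hasNE (G : SimpleGraph V) (T : Set V) : Prop :=
  ∃ a ∈ T, ∃ b ∈ T, a ≠ b ∧ ¬G.Adj a b

lemma hasNE_mono {T T' : Set V} (h : hasNE G T) (hT : T ⊆ T') : hasNE G T' := by
  obtain ⟨a, ha, b, hb, hab, hnadj⟩ := h
  exact ⟨a, hT ha, b, hT hb, hab, hnadj⟩

lemma preim_aux (A : Set V) : some ⁻¹' (({none} ∪ some '' A : Set (Option V))) = A := by
  ext v
  simp [Set.preimage_union, Set.preimage_image_eq _ (Option.some_injective V)]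

/-- One-step structure lemma. -/
lemma geo_step (htf : G.CliqueFree 3) (S : Set (Option V)) (hQ : hasNE G (some ⁻¹' S)) :
    geoInterval (addUniversal G) S = {none} ∪ some '' p3Interval G (some ⁻¹' S) := by
  ext x
  match x with
  | none =>
    simp only [Set.mem_union, Set.mem_singleton_iff, true_or, iff_true]
    exact (none_mem_geo_iff S).mpr (Or.inr hQ)
  | some v =>
    rw [some_mem_geo_iff htf]
    simp [Option.some_injective V |>.mem_set_image]

lemma geo_iter (htf : G.CliqueFree 3) (S : Set (Option V)) (hQ : hasNE G (some ⁻¹' S))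
    {k : ℕ} (hk : 1 ≤ k) :
    (geoInterval (addUniversal G))^[k] S =
      {none} ∪ some '' (p3Interval G)^[k] (some ⁻¹' S) := by
  induction k with
  | zero => omega
  | succ k ih =>
    rcases Nat.eq_or_lt_of_le hk with h1 | h1
    · rw [← h1]
      simpa using geo_step htf S hQ
    · have hk1 : 1 ≤ k := by omega
      have hQ' : hasNE G (some ⁻¹' (({none} ∪ some '' (p3Interval G)^[k] (some ⁻¹' S)) :
          Set (Option V))) := by
        rw [preim_aux]
        exact hasNE_mono hQ (subset_iter' p3_subset _ k)
      rw [Function.iterate_succ_apply', ih hk1, geo_step htf _ hQ', preim_aux,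
        Function.iterate_succ_apply']

lemma geo_hull (htf : G.CliqueFree 3) [Finite V] (S : Set (Option V))
    (hQ : hasNE G (some ⁻¹' S)) :
    convexHullOf (geoInterval (addUniversal G)) S =
      {none} ∪ some '' convexHullOf (p3Interval G) (some ⁻¹' S) := by
  obtain ⟨k0, hfix⟩ := exists_fixed' (I := p3Interval G) p3_subset (some ⁻¹' S)
  set k := k0 + 1 with hkdef
  have hk1 : 1 ≤ k := by omega
  have hfixk : p3Interval G ((p3Interval G)^[k] (some ⁻¹' S)) =
      (p3Interval G)^[k] (some ⁻¹' S) := by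
    rw [hkdef, Function.iterate_succ_apply', hfix, hfix]
  have hPhull : convexHullOf (p3Interval G) (some ⁻¹' S) =
      (p3Interval G)^[k] (some ⁻¹' S) :=
    hull_eq_iter_of_fixed p3_mono p3_subset hfixk
  have hIk : (geoInterval (addUniversal G))^[k] S =
      {none} ∪ some '' (p3Interval G)^[k] (some ⁻¹' S) := geo_iter htf S hQ hk1
  have hIfix : geoInterval (addUniversal G) ((geoInterval (addUniversal G))^[k] S) =
      (geoInterval (addUniversal G))^[k] S := by
    have := geo_iter htf S hQ (k := k + 1) (by omega)
    rw [Function.iterate_succ_apply'] at this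
    rw [this, hIk, Function.iterate_succ_apply', hfixk]
  rw [hull_eq_iter_of_fixed (geo_mono _) (geo_subset _) hIfix, hIk, hPhull]

end GraphFacts

/-! ### The iteration-time computations -/

section Main

variable {V : Type*} [Fintype V] {G : SimpleGraph V}

lemma iterTimeSet_notQ (htf : G.CliqueFree 3) (S : Set (Option V))
    (hQ : ¬hasNE G (some ⁻¹' S)) :
    iterTimeSet (geoInterval (addUniversal G)) S = 0 := by
  have hfix : geoInterval (addUniversal G) S = S := by
    refine le_antisymm ?_ (geo_subset _ S)
    rw [geo_char]
    rintro v (hv | ⟨x, hx, y, hy, hne, hnadj, _, _⟩)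
    · exact hv
    · exfalso
      obtain ⟨a, rfl⟩ : ∃ a, x = some a := by
        match x with
        | some a => exact ⟨a, rfl⟩
        | none =>
          exfalso
          obtain ⟨b, rfl⟩ := Option.ne_none_iff_exists'.mp (Ne.symm hne)
          exact hnadj addU_adj_none_some
      obtain ⟨b, rfl⟩ : ∃ b, y = some b := by
        match y with
        | some b => exact ⟨b, rfl⟩
        | none => exact absurd addU_adj_some_none hnadj
      exact hQ ⟨a, hx, b, hy, by simpa using hne, fun h => hnadj (addU_adj_some_some.mpr h)⟩
  have h0 : (geoInterval (addUniversal G))^[0] S = convexHullOf (geoInterval (addUniversal G)) S := by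
    rw [Function.iterate_zero_apply,
      hull_eq_iter_of_fixed (geo_mono _) (geo_subset _) (k := 0) (by simpa using hfix)]
    simp
  exact Nat.eq_zero_of_le_zero (Nat.sInf_le h0)

lemma iterTimeSet_Q_le (htf : G.CliqueFree 3) (S : Set (Option V))
    (hQ : hasNE G (some ⁻¹' S)) :
    iterTimeSet (geoInterval (addUniversal G)) S ≤
      max (iterTimeSet (p3Interval G) (some ⁻¹' S)) 1 := by
  set m := iterTimeSet (p3Interval G) (some ⁻¹' S) with hm
  have hk1 : 1 ≤ max m 1 := le_max_right _ _
  refine Nat.sInf_le ?_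
  show (geoInterval (addUniversal G))^[max m 1] S = _
  rw [geo_iter htf S hQ hk1, geo_hull htf S hQ]
  have : (p3Interval G)^[max m 1] (some ⁻¹' S) = convexHullOf (p3Interval G) (some ⁻¹' S) :=
    (iter_eq_hull_iff p3_mono p3_subset).mpr (le_max_left _ _)
  rw [this]

lemma iterTimeSet_Q_eq (htf : G.CliqueFree 3) (S : Set (Option V))
    (hQ : hasNE G (some ⁻¹' S)) (hnone : none ∉ S) :
    iterTimeSet (geoInterval (addUniversal G)) S =
      max (iterTimeSet (p3Interval G) (some ⁻¹' S)) 1 := by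
  refine le_antisymm (iterTimeSet_Q_le htf S hQ) ?_
  set n := iterTimeSet (geoInterval (addUniversal G)) S with hn
  have hmem : (geoInterval (addUniversal G))^[n] S =
      convexHullOf (geoInterval (addUniversal G)) S :=
    Nat.sInf_mem (iterTime_set_nonempty (geo_mono _) (geo_subset _) S)
  have hn1 : 1 ≤ n := by
    rcases Nat.eq_zero_or_pos n with h0 | h0
    · exfalso
      rw [h0, Function.iterate_zero_apply, geo_hull htf S hQ] at hmem
      exact hnone (hmem ▸ Or.inl rfl)
    · exact h0
  have hmn : iterTimeSet (p3Interval G) (some ⁻¹' S) ≤ n := by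
    rw [geo_iter htf S hQ hn1, geo_hull htf S hQ] at hmem
    have heq : (p3Interval G)^[n] (some ⁻¹' S) = convexHullOf (p3Interval G) (some ⁻¹' S) := by
      have := congrArg (fun T => some ⁻¹' T) hmem
      simpa only [preim_aux] using this
    exact (iter_eq_hull_iff p3_mono p3_subset).mp heq
  exact max_le hmn hn1

end Main

/-- for a triangle-free graph `G` with at least 3 vertices, the geodesic
iteration time of `G` plus a universal vertex equals `max (ti_P3(G)) 1`. -/
theorem stmt12 {V : Type*} [Fintype V] (G : SimpleGraph V)
    (htf : G.CliqueFree 3) (hV : 3 ≤ Fintype.card V) :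
    iterTime (geoInterval (addUniversal G)) = max (iterTime (p3Interval G)) 1 := by
  classical
  have hbddP : BddAbove (Set.range fun S : Set V => iterTimeSet (p3Interval G) S) :=
    (Set.finite_range _).bddAbove
  have hbddI : BddAbove (Set.range fun S : Set (Option V) =>
      iterTimeSet (geoInterval (addUniversal G)) S) :=
    (Set.finite_range _).bddAbove
  obtain ⟨S₀, hS₀⟩ := Finite.exists_max fun S : Set V => iterTimeSet (p3Interval G) S
  have ht : iterTime (p3Interval G) = iterTimeSet (p3Interval G) S₀ :=
    le_antisymm (ciSup_le hS₀) (le_ciSup hbddP S₀)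
  -- a non-adjacent pair exists
  obtain ⟨a, b, hab, hnadj⟩ : ∃ a b : V, a ≠ b ∧ ¬G.Adj a b := by
    obtain ⟨a, b, c, hab, hac, hbc⟩ := Fintype.two_lt_card_iff.mp (show 2 < Fintype.card V by omega)
    by_contra h
    push_neg at h
    exact triangle_free' htf (h a b hab) (h a c hac) (h b c hbc)
  refine le_antisymm ?_ ?_
  · -- upper bound
    refine ciSup_le fun S => ?_
    by_cases hQ : hasNE G (some ⁻¹' S)
    · refine (iterTimeSet_Q_le htf S hQ).trans ?_
      exact max_le_max (ht ▸ hS₀ (some ⁻¹' S)) le_rfl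
    · rw [iterTimeSet_notQ htf S hQ]
      omega
  · -- lower bound
    refine max_le ?_ ?_
    · -- iterTime P ≤ iterTime I
      rcases Nat.eq_zero_or_pos (iterTime (p3Interval G)) with h0 | h0
      · omega
      · have hm0 : 1 ≤ iterTimeSet (p3Interval G) S₀ := ht ▸ h0
        have hQ0 : hasNE G S₀ := by
          have hne0 : S₀ ≠ convexHullOf (p3Interval G) S₀ := by
            intro h
            have : iterTimeSet (p3Interval G) S₀ ≤ 0 :=
              Nat.sInf_le (by simpa using h)
            omega
          have hPne : p3Interval G S₀ ≠ S₀ := by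
            intro h
            exact hne0 (hull_eq_iter_of_fixed p3_mono p3_subset (k := 0)
              (by simpa using h)).symm
          obtain ⟨v, hv, hv'⟩ := Set.exists_of_ssubset ((p3_subset S₀).ssubset_of_ne
            (Ne.symm hPne))
          rcases hv with hv | ⟨x, hx, y, hy, hxy, hvx, hvy⟩
          · exact absurd hv hv'
          · exact ⟨x, hx, y, hy, hxy, fun h => triangle_free' htf hvx hvy h⟩
        set S : Set (Option V) := some '' S₀ with hSdef
        have hpre : some ⁻¹' S = S₀ := Set.preimage_image_eq _ (Option.some_injective V)
        have hnone : none ∉ S := by simp [hSdef]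
        have := iterTimeSet_Q_eq htf S (by rwa [hpre]) hnone
        rw [hpre] at this
        calc iterTime (p3Interval G) = iterTimeSet (p3Interval G) S₀ := ht
          _ ≤ max (iterTimeSet (p3Interval G) S₀) 1 := le_max_left _ _
          _ = iterTimeSet (geoInterval (addUniversal G)) S := this.symm
          _ ≤ iterTime (geoInterval (addUniversal G)) := le_ciSup hbddI S
    · -- 1 ≤ iterTime I
      set S : Set (Option V) := {some a, some b} with hSdef
      have hpre : some ⁻¹' S = {a, b} := by
        ext v
        simp [hSdef]
      have hQ : hasNE G (some ⁻¹' S) := by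
        rw [hpre]
        exact ⟨a, Or.inl rfl, b, Or.inr rfl, hab, hnadj⟩
      have hnone : none ∉ S := by simp [hSdef]
      have heq := iterTimeSet_Q_eq htf S hQ hnone
      calc (1 : ℕ) ≤ max (iterTimeSet (p3Interval G) (some ⁻¹' S)) 1 := le_max_right _ _
        _ = iterTimeSet (geoInterval (addUniversal G)) S := heq.symm
        _ ≤ iterTime (geoInterval (addUniversal G)) := le_ciSup hbddI S
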